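/- A tuple (γ, λ, η, x) satisfies Σ_k λ_k d_k − Σ_l ȳ_l² R_l x_l η_l ≤ γ for all d ∈ Ξ' if and only if there exist t ∈ ℝ and w ∈ ℝ^N₊ such that t + (1/(N(1−α))) Σ_i w_i − Σ_l ȳ_l² R_l x_l η_l ≤ γ and t + w_i ≥ Σ_k λ_k d^i_k for each i. -/
import Mathlib

private lemma exists_opt {N : ℕ} (hN : 0 < N) (c : ℝ) (hc0 : 0 < c)
    (hcN : 1 ≤ (N : ℝ) * c) (hc1 : c ≤ 1) (b : Fin N → ℝ) (hb : Monotone b) :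
    ∃ (t : ℝ) (ν : Fin N → ℝ), (∀ j, 0 ≤ ν j) ∧ (∑ j, ν j) = 1 ∧ (∀ j, ν j ≤ c) ∧
      (∑ j, ν j * b j) = t + c * ∑ j, max (b j - t) 0 := by
  haveI : NeZero N := ⟨hN.ne'⟩
  set m : ℕ := ⌊1 / c⌋₊ with hm
  have hmle : (m : ℝ) * c ≤ 1 := by
    have := Nat.floor_le (by positivity : (0:ℝ) ≤ 1 / c)
    rw [← hm] at this
    calc (m : ℝ) * c ≤ (1 / c) * c := by nlinarith
    _ = 1 := by field_simp
  have hmgt : 1 < ((m : ℝ) + 1) * c := by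
    have := Nat.lt_floor_add_one (1 / c)
    rw [← hm] at this
    calc (1:ℝ) = (1/c) * c := by field_simp
    _ < ((m:ℝ)+1) * c := by nlinarith
  have hmN : m ≤ N := by
    have h1 : (1:ℝ)/c ≤ (N:ℝ) := by rw [div_le_iff₀ hc0]; linarith
    calc m ≤ ⌊(N:ℝ)⌋₊ := Nat.floor_le_floor h1
    _ = N := Nat.floor_natCast N
  rcases eq_or_lt_of_le hmN with hEq | hlt
  · -- m = N, so N * c = 1
    have hNc : (N : ℝ) * c = 1 := by
      have hmR : (m:ℝ) = (N:ℝ) := by exact_mod_cast hEq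
      have h1 : (N:ℝ) * c ≤ 1 := hmR ▸ hmle
      linarith
    refine ⟨b 0, fun _ => c, fun _ => hc0.le, ?_, fun _ => le_rfl, ?_⟩
    · simp [Finset.sum_const, hNc, mul_comm]
    · have hmax : ∀ j, max (b j - b 0) 0 = b j - b 0 := fun j =>
        max_eq_left (by linarith [hb (Fin.zero_le j)])
      simp only [hmax]
      rw [Finset.sum_sub_distrib, Finset.sum_const, Finset.card_univ, Fintype.card_fin,
        nsmul_eq_mul, ← Finset.mul_sum]
      have h2 : c * ((N:ℝ) * b 0) = b 0 := by
        rw [← mul_assoc, mul_comm c, hNc, one_mul]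
      rw [mul_sub, h2]; ring
  · -- m < N
    set p : Fin N := ⟨N - 1 - m, by omega⟩ with hp
    have hcardIoi : (Finset.Ioi p).card = m := by
      rw [Fin.card_Ioi]; simp [hp]; omega
    set ν : Fin N → ℝ := fun j => if p < j then c else if j = p then 1 - m * c else 0 with hν
    have key : ∀ f : Fin N → ℝ, ∑ j, ν j * f j = c * (∑ j ∈ Finset.Ioi p, f j) + (1 - m*c) * f p := by
      intro f
      rw [← Finset.sum_filter_add_sum_filter_not Finset.univ (fun j => p < j)]
      have h1 : ∑ j ∈ Finset.univ.filter (fun j => p < j), ν j * f j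
          = c * ∑ j ∈ Finset.Ioi p, f j := by
        rw [Finset.mul_sum]
        rw [show Finset.univ.filter (fun j => p < j) = Finset.Ioi p from Finset.filter_lt_eq_Ioi]
        exact Finset.sum_congr rfl fun j hj => by
          simp only [hν]; rw [if_pos (Finset.mem_Ioi.mp hj)]
      have h2 : ∑ j ∈ Finset.univ.filter (fun j => ¬ p < j), ν j * f j = (1 - m*c) * f p := by
        rw [Finset.sum_eq_single p]
        · simp [hν]
        · intro j hj hne
          simp only [Finset.mem_filter] at hj
          simp [hν, hj.2, hne]
        · intro h; simp at h
      rw [h1, h2]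
    have hone : (1:ℝ) - m * c ≤ c := by nlinarith
    have hzero : (0:ℝ) ≤ 1 - m * c := by linarith
    refine ⟨b p, ν, ?_, ?_, ?_, ?_⟩
    · intro j; simp only [hν]; split_ifs <;> linarith
    · have := key (fun _ => 1)
      simp only [mul_one] at this
      rw [show (∑ j, ν j) = ∑ j, ν j * 1 by simp, key (fun _ => 1)]
      simp [Finset.sum_const, hcardIoi]
      ring
    · intro j; simp only [hν]; split_ifs <;> linarith
    · rw [key]
      have hmax1 : ∀ j ∈ Finset.Ioi p, max (b j - b p) 0 = b j - b p := fun j hj =>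
        max_eq_left (by linarith [hb (le_of_lt (Finset.mem_Ioi.mp hj))])
      have hmax2 : ∀ j ∈ Finset.univ.filter (fun j => ¬ p < j), max (b j - b p) 0 = 0 := by
        intro j hj
        simp only [Finset.mem_filter, not_lt] at hj
        exact max_eq_right (by linarith [hb hj.2])
      have hsplit : ∑ j, max (b j - b p) 0 = ∑ j ∈ Finset.Ioi p, (b j - b p) := by
        rw [← Finset.sum_filter_add_sum_filter_not Finset.univ (fun j => p < j)]
        rw [Finset.sum_congr rfl hmax2, Finset.sum_const, smul_zero, add_zero]
        rw [show Finset.univ.filter (fun j => p < j) = Finset.Ioi p from Finset.filter_lt_eq_Ioi]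
        exact Finset.sum_congr rfl hmax1
      rw [hsplit, Finset.sum_sub_distrib, Finset.sum_const, hcardIoi]
      ring

/-- Equivalence of the semi-infinite constraint over Ξ' with its finite robust
counterpart (PB2x1)–(PB2x3). -/
theorem robust_counterpart_cvar
    {K E : Type*} [Fintype K] [Fintype E]
    (N : ℕ) (hN : 0 < N) (α : ℝ) (hα : α ∈ Set.Icc (0 : ℝ) (1 - 1 / N))
    (dData : Fin N → K → ℝ) (lam : K → ℝ) (hlam : ∀ k, 0 ≤ lam k)
    (ybar R η : E → ℝ) (hy : ∀ l, 0 ≤ ybar l) (hR : ∀ l, 0 ≤ R l)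
    (hη : ∀ l, 0 ≤ η l) (x : E → ℝ) (hx : ∀ l, x l = 0 ∨ x l = 1)
    (γ : ℝ) :
    (∀ d : K → ℝ, (∃ μ : Fin N → ℝ, (∀ i, 0 ≤ μ i) ∧ (∑ i, μ i) = 1 ∧
          (∀ i, μ i ≤ 1 / (N * (1 - α))) ∧ d = ∑ i, μ i • dData i) →
        (∑ k, lam k * d k) - (∑ l, (ybar l) ^ 2 * R l * x l * η l) ≤ γ) ↔
    (∃ (t : ℝ) (w : Fin N → ℝ), (∀ i, 0 ≤ w i) ∧
        t + (1 / (N * (1 - α))) * (∑ i, w i) -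
          (∑ l, (ybar l) ^ 2 * R l * x l * η l) ≤ γ ∧
        (∀ i, (∑ k, lam k * dData i k) ≤ t + w i)) := by
  obtain ⟨hα0, hα1⟩ := hα
  have hNR : (0:ℝ) < N := by exact_mod_cast hN
  have h1α : 1 / (N:ℝ) ≤ 1 - α := by linarith
  have h1α0 : (0:ℝ) < 1 - α := lt_of_lt_of_le (by positivity) h1α
  set c : ℝ := 1 / (N * (1 - α)) with hc
  have hc0 : 0 < c := by positivity
  have hcN : 1 ≤ (N:ℝ) * c := by
    rw [hc]
    have h : (N:ℝ) * (1 / (↑N * (1 - α))) = 1 / (1 - α) := by field_simp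
    rw [h, le_div_iff₀ h1α0]; linarith
  have hc1 : c ≤ 1 := by
    rw [hc, div_le_one (by positivity)]
    calc (1:ℝ) = N * (1/N) := by field_simp
    _ ≤ N * (1 - α) := by
        exact mul_le_mul_of_nonneg_left h1α hNR.le
  set a : Fin N → ℝ := fun i => ∑ k, lam k * dData i k with ha
  set S : ℝ := ∑ l, (ybar l) ^ 2 * R l * x l * η l with hS
  have hsum : ∀ μ : Fin N → ℝ, ∑ k, lam k * (∑ i, μ i • dData i) k = ∑ i, μ i * a i := by
    intro μ
    have : ∀ k, (∑ i, μ i • dData i) k = ∑ i, μ i * dData i k := by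
      intro k; simp [Finset.sum_apply]
    simp only [this, Finset.mul_sum]
    rw [Finset.sum_comm]
    congr 1; ext i; rw [Finset.mul_sum]; congr 1; ext k; ring
  constructor
  · intro h
    set σ := Tuple.sort a with hσ
    have hb : Monotone (a ∘ σ) := Tuple.monotone_sort a
    obtain ⟨t, ν, hν0, hν1, hνc, hval⟩ := exists_opt hN c hc0 hcN hc1 (a ∘ σ) hb
    refine ⟨t, fun i => max (a i - t) 0, fun i => le_max_right _ _, ?_, fun i => by
      have := le_max_left (a i - t) 0; linarith⟩
    set μ : Fin N → ℝ := fun i => ν (σ.symm i) with hμ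
    have hμsum : ∀ f : Fin N → ℝ, ∑ i, μ i * f i = ∑ j, ν j * f (σ j) := by
      intro f
      rw [← Equiv.sum_comp σ (fun i => μ i * f i)]
      exact Finset.sum_congr rfl fun j _ => by simp [hμ]
    have hfeas := h (∑ i, μ i • dData i) ⟨μ, fun i => hν0 _, by
      have := hμsum (fun _ => 1); simpa using this.trans (by simpa using hν1), fun i => hνc _, rfl⟩
    rw [hsum] at hfeas
    have hw : ∑ i, max (a i - t) 0 = ∑ j, max (a (σ j) - t) 0 :=
      (Equiv.sum_comp σ (fun i => max (a i - t) 0)).symm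
    have : ∑ i, μ i * a i = t + c * ∑ i, max (a i - t) 0 := by
      rw [hμsum a, hw]; exact hval
    linarith
  · rintro ⟨t, w, hw0, hwγ, hwt⟩ d ⟨μ, hμ0, hμ1, hμc, hd⟩
    subst hd
    rw [hsum]
    have h1 : ∑ i, μ i * a i ≤ ∑ i, μ i * (t + w i) :=
      Finset.sum_le_sum fun i _ => mul_le_mul_of_nonneg_left (hwt i) (hμ0 i)
    have h2 : ∑ i, μ i * (t + w i) = t + ∑ i, μ i * w i := by
      simp only [mul_add, Finset.sum_add_distrib, ← Finset.sum_mul, hμ1, one_mul]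
    have h3 : ∑ i, μ i * w i ≤ c * ∑ i, w i := by
      rw [Finset.mul_sum]
      exact Finset.sum_le_sum fun i _ => mul_le_mul_of_nonneg_right (hμc i) (hw0 i)
    linarith
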